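/- arXiv:2103.08918 — 5 statements merged into one kernel-verified Lean document; each statement's English description precedes it below -/
import Mathlib

section
/- For 0 < μ < λ and 0 < α < 1, the derivative at s = 0 of M_{A₀}(s) = 2αλ / (2λ(α-1) + (λ+μ-2s) + √((λ+μ-2s)²-4λμ)) equals 2/(α(λ-μ)); i.e., the mean absorption time from the origin is E[A₀] = 2/(α(λ-μ)). -/
/-- The derivative at `0` of the MGF of the absorption time `A₀` equals `2/(α(λ-μ))`,
i.e. `E[A₀] = 2/(α(λ-μ))`. -/
theorem stmt_6 (lam mu α : ℝ) (hmu : 0 < mu) (hlam : mu < lam)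
    (hα0 : 0 < α) (hα1 : α < 1) :
    deriv (fun s : ℝ => 2*α*lam /
      (2*lam*(α-1) + (lam + mu - 2*s) + Real.sqrt ((lam + mu - 2*s)^2 - 4*lam*mu))) 0
      = 2 / (α * (lam - mu)) := by
  have hlm : 0 < lam - mu := by linarith
  have hlampos : 0 < lam := lt_trans hmu hlam
  have hu : HasDerivAt (fun s : ℝ => lam + mu - 2*s) (-2) 0 := by
    simpa using ((hasDerivAt_const (0:ℝ) (lam+mu)).fun_sub ((hasDerivAt_id (0:ℝ)).const_mul 2))
  have hg : HasDerivAt (fun s : ℝ => (lam+mu-2*s)^2 - 4*lam*mu) (-4*(lam+mu)) 0 := by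
    have := (hu.fun_pow 2).fun_sub (hasDerivAt_const (0:ℝ) (4*lam*mu))
    refine this.congr_deriv ?_
    simp
    ring
  have hg0 : ((lam+mu-2*(0:ℝ))^2 - 4*lam*mu) = (lam-mu)^2 := by ring
  have hg0ne : ((lam+mu-2*(0:ℝ))^2 - 4*lam*mu) ≠ 0 := by
    rw [hg0]; positivity
  have hsqrtg0 : Real.sqrt ((lam+mu-2*(0:ℝ))^2 - 4*lam*mu) = lam - mu := by
    rw [hg0]; exact Real.sqrt_sq hlm.le
  have hsq : HasDerivAt (fun s : ℝ => Real.sqrt ((lam+mu-2*s)^2 - 4*lam*mu))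
      (1/(2*(lam-mu)) * (-4*(lam+mu))) 0 := by
    have := (Real.hasDerivAt_sqrt hg0ne).comp 0 hg
    simp only [Function.comp_def] at this
    refine this.congr_deriv ?_
    rw [hsqrtg0]
  have hD : HasDerivAt (fun s : ℝ => 2*lam*(α-1) + (lam + mu - 2*s) +
      Real.sqrt ((lam + mu - 2*s)^2 - 4*lam*mu))
      (-2 + 1/(2*(lam-mu)) * (-4*(lam+mu))) 0 := by
    simpa using ((hasDerivAt_const (0:ℝ) (2*lam*(α-1))).fun_add hu).fun_add hsq
  have hD0 : (2*lam*(α-1) + (lam + mu - 2*(0:ℝ)) +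
      Real.sqrt ((lam + mu - 2*(0:ℝ))^2 - 4*lam*mu)) = 2*lam*α := by
    rw [hsqrtg0]; ring
  have hD0ne : (2*lam*(α-1) + (lam + mu - 2*(0:ℝ)) +
      Real.sqrt ((lam + mu - 2*(0:ℝ))^2 - 4*lam*mu)) ≠ 0 := by
    rw [hD0]; positivity
  have hf := (hasDerivAt_const (0:ℝ) (2*α*lam)).fun_div hD hD0ne
  rw [hf.deriv]
  rw [hD0]
  field_simp
  ring
end

section
/- For 0 < μ < λ and 0 < α < 1, the variance of the absorption time A₀, computed from its MGF M_{A₀}(s) = 2αλ/(2λ(α-1)+(λ+μ-2s)+√((λ+μ-2s)²-4λμ)) via Var = M''(0) - M'(0)², equals 4(λ + μ(2α-1))/(α²(λ-μ)³). -/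
open Real Filter Topology

/-- The variance of `A₀`, computed as `M''(0) - M'(0)²` from its MGF,
equals `4(λ + μ(2α-1))/(α²(λ-μ)³)`. -/
theorem stmt_7 (lam mu α : ℝ) (hmu : 0 < mu) (hlam : mu < lam)
    (hα0 : 0 < α) (hα1 : α < 1)
    (MA0 : ℝ → ℝ)
    (hMA0 : ∀ s, MA0 s = 2*α*lam /
      (2*lam*(α-1) + (lam + mu - 2*s) + Real.sqrt ((lam + mu - 2*s)^2 - 4*lam*mu))) :
    deriv (deriv MA0) 0 - (deriv MA0 0)^2
      = 4*(lam + mu*(2*α - 1)) / (α^2 * (lam - mu)^3) := by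
  obtain rfl : MA0 = fun s => 2*α*lam /
      (2*lam*(α-1) + (lam + mu - 2*s) + Real.sqrt ((lam + mu - 2*s)^2 - 4*lam*mu)) :=
    funext hMA0
  have hlm : (0:ℝ) < lam - mu := by linarith
  have hlam0 : (0:ℝ) < lam := lt_trans hmu hlam
  set q : ℝ → ℝ := fun s => Real.sqrt ((lam + mu - 2*s)^2 - 4*lam*mu) with hq_def
  set Dd : ℝ → ℝ := fun s => 2*lam*(α-1) + (lam + mu - 2*s) + q s with hD_def
  set F : ℝ → ℝ := fun s =>
    (0 * Dd s - 2*α*lam * (-2 + (-4*(lam+mu-2*s)) / (2 * q s))) / (Dd s)^2 with hF_def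
  -- basic derivatives
  have hu : ∀ s : ℝ, HasDerivAt (fun t : ℝ => lam + mu - 2*t) (-2) s := by
    intro s
    simpa using ((hasDerivAt_id s).const_mul (2:ℝ)).const_sub (lam+mu)
  have hgt : ∀ s : ℝ, HasDerivAt (fun t : ℝ => (lam+mu-2*t)^2 - 4*lam*mu)
      (-4*(lam+mu-2*s)) s := by
    intro s
    have h : HasDerivAt (fun t : ℝ => (lam+mu-2*t)^2 - 4*lam*mu) ((2:ℕ) * (lam+mu-2*s)^(2-1) * (-2)) s :=
      ((hu s).pow 2).sub_const (4*lam*mu)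
    convert h using 1
    push_cast; ring
  have hqd : ∀ s : ℝ, 0 < (lam+mu-2*s)^2 - 4*lam*mu →
      HasDerivAt q ((-4*(lam+mu-2*s)) / (2 * q s)) s := by
    intro s hs
    exact (hgt s).sqrt (ne_of_gt hs)
  have hDd : ∀ s : ℝ, 0 < (lam+mu-2*s)^2 - 4*lam*mu →
      HasDerivAt Dd (-2 + (-4*(lam+mu-2*s)) / (2 * q s)) s := by
    intro s hs
    exact ((hu s).const_add (2*lam*(α-1))).add (hqd s hs)
  have hMd : ∀ s : ℝ, 0 < (lam+mu-2*s)^2 - 4*lam*mu → Dd s ≠ 0 →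
      HasDerivAt (fun s => 2*α*lam / Dd s) (F s) s := by
    intro s h1 h2
    exact (hasDerivAt_const s (2*α*lam)).div (hDd s h1) h2
  -- values at 0
  have hg0 : (0:ℝ) < (lam+mu-2*(0:ℝ))^2 - 4*lam*mu := by nlinarith
  have hσ0 : q 0 = lam - mu := by
    have h : (lam + mu - 2*(0:ℝ))^2 - 4*lam*mu = (lam-mu)^2 := by ring
    simp only [hq_def]
    rw [h, Real.sqrt_sq hlm.le]
  have hD0 : Dd 0 = 2*lam*α := by
    simp only [hD_def]; rw [hσ0]; ring
  have hD0pos : (0:ℝ) < Dd 0 := by rw [hD0]; positivity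
  -- eventual positivity
  have hgcont : Continuous (fun s : ℝ => (lam+mu-2*s)^2 - 4*lam*mu) := by fun_prop
  have hDcont : Continuous Dd := by
    rw [hD_def, hq_def]; fun_prop
  have hgev : ∀ᶠ s in 𝓝 (0:ℝ), 0 < (lam+mu-2*s)^2 - 4*lam*mu :=
    (hgcont.tendsto 0).eventually (eventually_gt_nhds hg0)
  have hDev : ∀ᶠ s in 𝓝 (0:ℝ), 0 < Dd s :=
    (hDcont.tendsto 0).eventually (eventually_gt_nhds hD0pos)
  have hder : deriv (fun s => 2*α*lam / Dd s) =ᶠ[𝓝 (0:ℝ)] F :=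
    (hgev.and hDev).mono fun s ⟨h1, h2⟩ => (hMd s h1 h2.ne').deriv
  have h2 : deriv (deriv (fun s => 2*α*lam / Dd s)) 0 = deriv F 0 := hder.deriv_eq
  -- second derivative
  have hq0 := hqd 0 hg0
  have hq0ne : (2 : ℝ) * q 0 ≠ 0 := by rw [hσ0]; positivity
  have hInner : HasDerivAt (fun s => -2 + (-4*(lam+mu-2*s)) / (2 * q s))
      (((-4*(-2)) * (2*q 0) - (-4*(lam+mu-2*(0:ℝ))) * (2 * ((-4*(lam+mu-2*(0:ℝ))) / (2 * q 0)))) / (2*q 0)^2) 0 := by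
    exact ((((hu 0).const_mul (-4)).div (hq0.const_mul 2) hq0ne).const_add (-2))
  have hD0' := hDd 0 hg0
  have hNum : HasDerivAt (fun s => 0 * Dd s - 2*α*lam * (-2 + (-4*(lam+mu-2*s)) / (2 * q s)))
      ((0 * Dd 0 + 0 * (-2 + (-4*(lam+mu-2*(0:ℝ))) / (2 * q 0))) -
       (0 * (-2 + (-4*(lam+mu-2*(0:ℝ))) / (2 * q 0)) + 2*α*lam *
        (((-4*(-2)) * (2*q 0) - (-4*(lam+mu-2*(0:ℝ))) * (2 * ((-4*(lam+mu-2*(0:ℝ))) / (2 * q 0)))) / (2*q 0)^2))) 0 := by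
    exact ((hasDerivAt_const 0 (0:ℝ)).mul hD0').sub ((hasDerivAt_const 0 (2*α*lam)).mul hInner)
  have hBne : (Dd 0)^2 ≠ 0 := pow_ne_zero 2 hD0pos.ne'
  have hB : HasDerivAt (fun s => (Dd s)^2)
      ((2:ℕ) * Dd 0 ^ 1 * (-2 + (-4*(lam+mu-2*(0:ℝ))) / (2 * q 0))) 0 := hD0'.pow 2
  have hF0 := (hNum.div hB hBne).deriv
  have hF0' : deriv F 0 = _ := hF0
  have hfd0 : deriv (fun s => 2*α*lam / Dd s) 0 = F 0 := (hMd 0 hg0 hD0pos.ne').deriv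
  rw [h2, hF0', hfd0, hF_def]
  simp only [hσ0, hD0]
  norm_num
  have hne1 : α ≠ 0 := hα0.ne'
  have hne2 : lam - mu ≠ 0 := hlm.ne'
  have hne3 : lam ≠ 0 := hlam0.ne'
  field_simp
  ring
end

section
/- For 0 < μ < λ and s < (√λ-√μ)²/2, the Laplace-type integral √(λ/μ) ∫₀^∞ (e^{-((λ+μ)/2 - s)y}/y) I₁(y√(λμ)) dy equals ((λ+μ-2s) - √((λ+μ-2s)² - 4λμ))/(2μ), where I₁ is the modified Bessel function of the first kind. -/
open MeasureTheory Finset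

/-- The modified Bessel function of the first kind `I₁`. -/
noncomputable def besselI1 (z : ℝ) : ℝ :=
  (z / 2) * ∑' k : ℕ, (z ^ 2 / 4) ^ k / (Nat.factorial k * Nat.factorial (k + 1))

lemma catalan_le_four_pow (n : ℕ) : (catalan n : ℝ) ≤ 4 ^ n := by
  have h1 : catalan n ≤ n.centralBinom := by
    rw [← succ_mul_catalan_eq_centralBinom]
    exact Nat.le_mul_of_pos_left _ n.succ_pos
  have h2 : n.centralBinom ≤ 4 ^ n := by
    have hm : n ∈ Finset.range (2 * n + 1) := by simp; omega
    calc n.centralBinom = (2 * n).choose n := rfl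
      _ ≤ ∑ m ∈ Finset.range (2 * n + 1), (2 * n).choose m :=
          Finset.single_le_sum (fun _ _ => Nat.zero_le _) hm
      _ = 2 ^ (2 * n) := Nat.sum_range_choose (2 * n)
      _ = 4 ^ n := by rw [pow_mul]; norm_num
  calc (catalan n : ℝ) ≤ (n.centralBinom : ℝ) := by exact_mod_cast h1
    _ ≤ (4:ℝ) ^ n := by exact_mod_cast h2

lemma summable_catalan {x : ℝ} (hx : 0 ≤ x) (hx4 : 4 * x < 1) :
    Summable (fun k : ℕ => (catalan k : ℝ) * x ^ k) := by
  apply Summable.of_nonneg_of_le (fun k => by positivity) (fun k => ?_)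
    (summable_geometric_of_lt_one (by positivity) hx4)
  calc (catalan k : ℝ) * x ^ k ≤ 4 ^ k * x ^ k :=
        mul_le_mul_of_nonneg_right (catalan_le_four_pow k) (pow_nonneg hx k)
    _ = (4 * x) ^ k := by rw [mul_pow]

lemma catalan_gf {x : ℝ} (hx : 0 < x) (hx4 : 4 * x < 1) :
    ∑' k : ℕ, (catalan k : ℝ) * x ^ k = (1 - Real.sqrt (1 - 4 * x)) / (2 * x) := by
  set t := Real.sqrt (1 - 4 * x) with ht
  have ht2 : t ^ 2 = 1 - 4 * x := Real.sq_sqrt (by linarith)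
  have ht0 : 0 < t := Real.sqrt_pos.mpr (by linarith)
  have ht1 : t < 1 := by nlinarith
  set r := (1 - t) / (2 * x) with hr
  have hr0 : 0 ≤ r := div_nonneg (by linarith) (by linarith)
  have hfix : 1 + x * r ^ 2 = r := by
    rw [hr]; field_simp; nlinarith
  have hsum := summable_catalan hx.le hx4
  set u := ∑' k : ℕ, (catalan k : ℝ) * x ^ k with hu
  have hnorm : Summable (fun k : ℕ => ‖(catalan k : ℝ) * x ^ k‖) := by
    simp only [Real.norm_eq_abs]; exact hsum.abs
  have hcauchy : u * u = ∑' n : ℕ, (catalan (n+1) : ℝ) * x ^ n := by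
    rw [hu, tsum_mul_tsum_eq_tsum_sum_antidiagonal_of_summable_norm hnorm hnorm]
    refine tsum_congr fun n => ?_
    rw [catalan_succ']
    push_cast
    rw [Finset.sum_mul]
    refine Finset.sum_congr rfl fun ij hij => ?_
    have h : ij.1 + ij.2 = n := Finset.HasAntidiagonal.mem_antidiagonal.mp hij
    rw [← h]; ring
  have hfe : u = 1 + x * (u * u) := by
    rw [hcauchy, ← tsum_mul_left]
    rw [hu, Summable.tsum_eq_zero_add hsum]
    simp only [catalan_zero, Nat.cast_one, pow_zero, mul_one]
    congr 1
    exact tsum_congr fun n => by ring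
  have hpart : ∀ N, ∑ k ∈ range N, (catalan k : ℝ) * x ^ k ≤ r := by
    intro N
    induction N with
    | zero => simpa using hr0
    | succ N ih =>
      have hSnn : 0 ≤ ∑ k ∈ range N, (catalan k : ℝ) * x ^ k :=
        Finset.sum_nonneg fun k _ => by positivity
      have key : ∑ k ∈ range (N+1), (catalan k : ℝ) * x ^ k
          ≤ 1 + x * (∑ k ∈ range N, (catalan k : ℝ) * x ^ k) ^ 2 := by
        rw [Finset.sum_range_succ']
        simp only [catalan_zero, Nat.cast_one, pow_zero, mul_one]
        rw [add_comm]
        have e1 : ∑ k ∈ range N, (catalan (k+1) : ℝ) * x ^ (k+1)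
            = x * ∑ k ∈ range N, ∑ ij ∈ Finset.HasAntidiagonal.antidiagonal k,
                ((catalan ij.1 : ℝ) * x ^ ij.1) * ((catalan ij.2 : ℝ) * x ^ ij.2) := by
          rw [Finset.mul_sum]
          refine Finset.sum_congr rfl fun k _ => ?_
          rw [catalan_succ']
          push_cast
          rw [Finset.sum_mul, Finset.mul_sum]
          refine Finset.sum_congr rfl fun ij hij => ?_
          have h : ij.1 + ij.2 = k := Finset.HasAntidiagonal.mem_antidiagonal.mp hij
          rw [← h]; ring
        have e2 : ∑ k ∈ range N, ∑ ij ∈ Finset.HasAntidiagonal.antidiagonal k,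
                ((catalan ij.1 : ℝ) * x ^ ij.1) * ((catalan ij.2 : ℝ) * x ^ ij.2)
            ≤ (∑ k ∈ range N, (catalan k : ℝ) * x ^ k) ^ 2 := by
          rw [sq, Finset.sum_mul_sum, ← Finset.sum_product']
          rw [← Finset.sum_biUnion]
          · apply Finset.sum_le_sum_of_subset_of_nonneg
            · intro ij hij
              simp only [Finset.mem_biUnion, Finset.mem_range] at hij
              obtain ⟨k, hk, hij'⟩ := hij
              have h := Finset.HasAntidiagonal.mem_antidiagonal.mp hij'
              simp only [Finset.mem_product, Finset.mem_range]
              omega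
            · intro ij _ _
              positivity
          · intro p hp q hq hpq
            apply Finset.disjoint_left.mpr
            intro ij h1 h2
            have e1 := Finset.HasAntidiagonal.mem_antidiagonal.mp h1
            have e2 := Finset.HasAntidiagonal.mem_antidiagonal.mp h2
            exact hpq (by omega)
        calc 1 + ∑ k ∈ range N, (catalan (k+1) : ℝ) * x ^ (k+1)
            = 1 + x * ∑ k ∈ range N, ∑ ij ∈ Finset.HasAntidiagonal.antidiagonal k,
                ((catalan ij.1 : ℝ) * x ^ ij.1) * ((catalan ij.2 : ℝ) * x ^ ij.2) := by rw [e1]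
          _ ≤ 1 + x * (∑ k ∈ range N, (catalan k : ℝ) * x ^ k) ^ 2 := by
              have := mul_le_mul_of_nonneg_left e2 hx.le
              linarith
      calc ∑ k ∈ range (N+1), (catalan k : ℝ) * x ^ k
          ≤ 1 + x * (∑ k ∈ range N, (catalan k : ℝ) * x ^ k) ^ 2 := key
        _ ≤ 1 + x * r ^ 2 := by
            have hs2 : (∑ k ∈ range N, (catalan k : ℝ) * x ^ k) ^ 2 ≤ r ^ 2 := by nlinarith
            nlinarith
        _ = r := hfix
  have hur : u ≤ r := Summable.tsum_le_of_sum_range_le hsum hpart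
  have hu0 : 0 ≤ u := tsum_nonneg fun k => by positivity
  have h2xr : 2 * x * r = 1 - t := by rw [hr]; field_simp
  have h2 : x * (u + r) < 1 := by nlinarith
  have hzero : (u - r) * (x * (u + r) - 1) = 0 := by nlinarith [hfix, hfe]
  have : u = r := by
    rcases mul_eq_zero.mp hzero with h | h
    · linarith
    · linarith
  rw [this]

lemma integrableOn_pow_mul_exp {a : ℝ} (ha0 : 0 < a) (k : ℕ) :
    IntegrableOn (fun y : ℝ => y ^ (2*k) * Real.exp (-(a*y))) (Set.Ioi 0) := by
  have h := integrableOn_rpow_mul_exp_neg_mul_rpow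
    (show (-1:ℝ) < ((2*k : ℕ) : ℝ) from lt_of_lt_of_le (by norm_num) (Nat.cast_nonneg _))
    (one_pos : (0:ℝ) < 1) ha0
  apply (h.congr_fun ?_ measurableSet_Ioi)
  intro y hy
  simp only [Real.rpow_one, neg_mul]
  rw [Real.rpow_natCast]

lemma integral_pow_mul_exp {a : ℝ} (ha0 : 0 < a) (k : ℕ) :
    ∫ y in Set.Ioi (0:ℝ), y ^ (2*k) * Real.exp (-(a*y)) = ((2*k).factorial : ℝ) / a^(2*k+1) := by
  have h := Real.integral_rpow_mul_exp_neg_mul_Ioi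
    (show (0:ℝ) < ((2*k : ℕ) : ℝ) + 1 by positivity) ha0
  rw [show (((2*k:ℕ):ℝ) + 1 - 1) = ((2*k:ℕ):ℝ) by ring] at h
  rw [Real.Gamma_nat_eq_factorial] at h
  rw [show ((2*k:ℕ):ℝ) + 1 = ((2*k+1:ℕ):ℝ) by push_cast; ring, Real.rpow_natCast] at h
  rw [show ∫ y in Set.Ioi (0:ℝ), y^(2*k) * Real.exp (-(a*y))
      = ∫ t in Set.Ioi (0:ℝ), t ^ (((2*k:ℕ):ℝ)) * Real.exp (-(a*t)) from
    setIntegral_congr_fun measurableSet_Ioi fun y hy => by rw [Real.rpow_natCast], h]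
  rw [one_div, inv_pow]
  field_simp

lemma final_alg (l m a S mu : ℝ) (hl : 0 < l) (hm : 0 < m) (ha : 0 < a)
    (hmu : m * m = mu) :
    l/m * (l*m/(2*a) * ((1 - S/a)/(2*((l*m)^2/(4*a^2))))) = (2*a - 2*S)/(2*mu) := by
  subst hmu
  field_simp
  ring

set_option maxHeartbeats 1000000 in
/-- The MGF of the renewal cycle `C₀`, computed from its density:
`√(λ/μ) ∫₀^∞ (e^{-((λ+μ)/2 - s)y}/y) I₁(y√(λμ)) dy
  = ((λ+μ-2s) - √((λ+μ-2s)² - 4λμ))/(2μ)`. -/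
theorem stmt_9 (lam mu s : ℝ) (hmu : 0 < mu) (hlam : mu < lam)
    (hs : s < (Real.sqrt lam - Real.sqrt mu)^2 / 2) :
    Real.sqrt (lam / mu) *
      ∫ y in Set.Ioi (0:ℝ),
        (Real.exp (-((lam + mu)/2 - s) * y) / y) * besselI1 (y * Real.sqrt (lam * mu))
      = ((lam + mu - 2*s) - Real.sqrt ((lam + mu - 2*s)^2 - 4*lam*mu)) / (2*mu) := by
  have hlam0 : 0 < lam := hmu.trans hlam
  set a : ℝ := (lam + mu)/2 - s with ha
  set b : ℝ := Real.sqrt (lam * mu) with hb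
  have hb0 : 0 < b := Real.sqrt_pos.mpr (by positivity)
  have hbml : b = Real.sqrt lam * Real.sqrt mu := Real.sqrt_mul hlam0.le mu
  have hba : b < a := by
    have hl := Real.sq_sqrt hlam0.le
    have hm := Real.sq_sqrt hmu.le
    have h1 : (Real.sqrt lam - Real.sqrt mu)^2 = lam + mu - 2*b := by
      rw [hbml]; nlinarith
    rw [ha]
    rw [h1] at hs
    linarith
  have ha0 : 0 < a := hb0.trans hba
  set x : ℝ := b^2/(4*a^2) with hx
  have hx0 : 0 < x := by positivity
  have hx4 : 4 * x < 1 := by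
    rw [hx, show (4:ℝ) * (b^2/(4*a^2)) = b^2/a^2 by field_simp, div_lt_one (by positivity)]
    nlinarith
  set F : ℕ → ℝ → ℝ := fun k y =>
    ((b/2) * ((b^2/4)^k / ((Nat.factorial k : ℝ) * (Nat.factorial (k+1) : ℝ)))) *
      (y^(2*k) * Real.exp (-(a*y))) with hF
  set T : ℕ → ℝ := fun k => (b/(2*a)) * ((catalan k : ℝ) * x^k) with hT
  have hFnn : ∀ k y, 0 ≤ F k y := fun k y => by
    rw [hF]; dsimp only; rw [pow_mul]; positivity
  have hTnn : ∀ k, 0 ≤ T k := fun k => by rw [hT]; dsimp only; positivity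
  have hFi : ∀ k, IntegrableOn (F k) (Set.Ioi 0) := fun k =>
    ((integrableOn_pow_mul_exp ha0 k).const_mul _)
  have hTsum : Summable T := (summable_catalan hx0.le hx4).mul_left _
  have hfacteq : ∀ k : ℕ, ((2*k).factorial : ℝ)
      = (catalan k : ℝ) * ((k:ℝ)+1) * (Nat.factorial k : ℝ) * (Nat.factorial k : ℝ) := by
    intro k
    have h1 : (k+1) * catalan k = k.centralBinom := succ_mul_catalan_eq_centralBinom k
    have h2 : (2*k).choose k * k.factorial * (2*k - k).factorial = (2*k).factorial :=
      Nat.choose_mul_factorial_mul_factorial (by omega)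
    have h3 : 2*k - k = k := by omega
    rw [h3] at h2
    have h4 : k.centralBinom = (2*k).choose k := rfl
    rw [← h2, ← h4, ← h1]
    push_cast
    ring
  have hTval : ∀ k, ∫ y in Set.Ioi (0:ℝ), F k y = T k := by
    intro k
    rw [hF]; dsimp only
    rw [integral_const_mul, integral_pow_mul_exp ha0 k, hT]
    dsimp only
    have hbx : (b^2/4)^k = x^k * (a^2)^k := by
      rw [← mul_pow]; congr 1; rw [hx]; field_simp
    have hpow : a^(2*k+1) = (a^2)^k * a := by rw [pow_succ, pow_mul]
    rw [hfacteq k, hbx, hpow, Nat.factorial_succ]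
    have hk : (Nat.factorial k : ℝ) ≠ 0 := Nat.cast_ne_zero.mpr k.factorial_ne_zero
    have hk1 : ((k:ℝ)+1) ≠ 0 := by positivity
    push_cast
    field_simp
  have hmeas : ∀ k, AEStronglyMeasurable (F k) (volume.restrict (Set.Ioi 0)) := by
    intro k
    rw [hF]
    apply Continuous.aestronglyMeasurable
    fun_prop
  have hbound : ∑' k, ∫⁻ y in Set.Ioi (0:ℝ), ‖F k y‖₊ ≠ ⊤ := by
    have heq : ∀ k, ∫⁻ y in Set.Ioi (0:ℝ), ‖F k y‖₊ = ENNReal.ofReal (T k) := by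
      intro k
      rw [← hTval k, MeasureTheory.ofReal_integral_eq_lintegral_ofReal (hFi k)
        (Filter.Eventually.of_forall fun y => hFnn k y)]
      exact lintegral_congr fun y => (Real.enorm_eq_ofReal (hFnn k y))
    rw [tsum_congr heq, ← ENNReal.ofReal_tsum_of_nonneg hTnn hTsum]
    exact ENNReal.ofReal_ne_top
  have hcong : (∫ y in Set.Ioi (0:ℝ), (Real.exp (-a * y) / y) * besselI1 (y * b))
      = ∫ y in Set.Ioi (0:ℝ), ∑' k, F k y := by
    refine setIntegral_congr_fun measurableSet_Ioi fun y hy => ?_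
    have hy0 : (0:ℝ) < y := hy
    unfold besselI1
    rw [hF]
    dsimp only
    rw [← tsum_mul_left, ← tsum_mul_left]
    refine tsum_congr fun k => ?_
    have h1 : ((y*b)^2/4)^k = y^(2*k) * (b^2/4)^k := by
      rw [show (y*b)^2/4 = y^2 * (b^2/4) by ring, mul_pow, ← pow_mul]
    rw [h1]
    field_simp
  rw [hcong, integral_tsum hmeas hbound, tsum_congr hTval]
  have htsum : ∑' k, T k = (b/(2*a)) * ((1 - Real.sqrt (1-4*x))/(2*x)) := by
    rw [hT]
    dsimp only
    rw [tsum_mul_left, catalan_gf hx0 hx4]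
  rw [htsum]
  -- final algebra
  have hS : Real.sqrt (1 - 4*x) = Real.sqrt (a^2 - b^2) / a := by
    rw [show 1 - 4*x = (a^2-b^2)/a^2 by rw [hx]; field_simp]
    rw [Real.sqrt_div (by nlinarith) _, Real.sqrt_sq ha0.le]
  set S := Real.sqrt (a^2 - b^2) with hSdef
  have hS0 : 0 ≤ S := Real.sqrt_nonneg _
  have h2a : lam + mu - 2*s = 2*a := by rw [ha]; ring
  have hb2 : b^2 = lam * mu := Real.sq_sqrt (by positivity)
  have hQ : (lam+mu-2*s)^2 - 4*lam*mu = 4*(a^2-b^2) := by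
    rw [h2a]; linear_combination (4:ℝ) * hb2
  have h4 : Real.sqrt (4*(a^2-b^2)) = 2*S := by
    rw [show (4:ℝ)*(a^2-b^2) = 2^2*(a^2-b^2) by ring,
      Real.sqrt_mul (by positivity), Real.sqrt_sq (by norm_num : (0:ℝ) ≤ 2)]
  rw [hS, hQ, h4, h2a]
  have hsl : Real.sqrt (lam/mu) = Real.sqrt lam / Real.sqrt mu := Real.sqrt_div hlam0.le mu
  have hmusq : Real.sqrt mu * Real.sqrt mu = mu := Real.mul_self_sqrt hmu.le
  have hlsq : Real.sqrt lam * Real.sqrt lam = lam := Real.mul_self_sqrt hlam0.le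
  have hsm0 : (0:ℝ) < Real.sqrt mu := Real.sqrt_pos.mpr hmu
  have hsl0 : (0:ℝ) < Real.sqrt lam := Real.sqrt_pos.mpr hlam0
  rw [hsl, hx, hbml]
  exact final_alg _ _ _ _ _ hsl0 hsm0 ha0 hmusq
end

section
/- For λ, μ > 0 and t > 0, the function ψ₀(t) = (λ/(t√(λμ))) e^{-(λ+μ)t} I₁(2t√(λμ)) satisfies ψ₀(t) = λe^{-(λ+μ)t}[1 + √(λμ/t)∫₀^t ((t-y)/√y) I₁(2√(λμty)) dy]. -/
open MeasureTheory

noncomputable def Saux (x : ℝ) : ℝ :=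
  ∑' k : ℕ, x ^ k / (Nat.factorial k * Nat.factorial (k + 1))

lemma fac_le (k m : ℕ) : (Nat.factorial k : ℝ) ≤ (Nat.factorial k * Nat.factorial m : ℝ) := by
  have h1 : (1 : ℝ) ≤ Nat.factorial m := by exact_mod_cast Nat.one_le_iff_ne_zero.2 (Nat.factorial_ne_zero m)
  nlinarith [Nat.cast_pos (α := ℝ) |>.2 (Nat.factorial_pos k)]

lemma summable_Saux (x : ℝ) (hx : 0 ≤ x) :
    Summable fun k : ℕ => x ^ k / (Nat.factorial k * Nat.factorial (k + 1) : ℝ) := by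
  refine Summable.of_nonneg_of_le (fun k => by positivity) (fun k => ?_)
    (Real.summable_pow_div_factorial x)
  gcongr
  exact_mod_cast fac_le k (k+1)

lemma integral_mono_aux (t : ℝ) (ht : 0 < t) (k : ℕ) :
    ∫ y in (0:ℝ)..t, (t - y) * y ^ k = t ^ (k + 2) / ((k + 1) * (k + 2)) := by
  have h : ∀ y : ℝ, (t - y) * y ^ k = t * y ^ k - y ^ (k + 1) := by
    intro y; ring
  simp_rw [h]
  rw [intervalIntegral.integral_sub (by exact (intervalIntegral.intervalIntegrable_pow k).const_mul t) (intervalIntegral.intervalIntegrable_pow (k+1)),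
    intervalIntegral.integral_const_mul, integral_pow, integral_pow]
  have h1 : ((k:ℝ) + 1) ≠ 0 := by positivity
  have h2 : ((k:ℝ) + 2) ≠ 0 := by positivity
  push_cast
  field_simp
  ring

lemma key_swap (b t : ℝ) (hb : 0 ≤ b) (ht : 0 < t) :
    ∫ y in (0:ℝ)..t, (t - y) * Saux (b * y)
      = ∑' k : ℕ, b ^ k * t ^ (k + 2) /
          ((Nat.factorial k * Nat.factorial (k + 1)) * ((k + 1) * (k + 2))) := by
  set F : ℕ → ℝ → ℝ := fun k y => (t - y) * ((b * y) ^ k / (Nat.factorial k * Nat.factorial (k + 1))) with hF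
  have hFcont : ∀ k, Continuous (F k) := by
    intro k
    exact (continuous_const.sub continuous_id).mul
      (((continuous_const.mul continuous_id).pow k).div_const _)
  have hFval : ∀ k, ∫ y in (0:ℝ)..t, F k y
      = b ^ k * t ^ (k + 2) /
          ((Nat.factorial k * Nat.factorial (k + 1)) * ((k + 1) * (k + 2))) := by
    intro k
    have : ∀ y : ℝ, F k y = (b ^ k / (Nat.factorial k * Nat.factorial (k + 1))) * ((t - y) * y ^ k) := by
      intro y; simp only [hF, mul_pow]; ring
    simp_rw [this]
    rw [intervalIntegral.integral_const_mul, integral_mono_aux t ht k]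
    field_simp
  have hswap : ∑' k : ℕ, ∫ y in Set.Ioc (0:ℝ) t, F k y
      = ∫ y in Set.Ioc (0:ℝ) t, ∑' k : ℕ, F k y := by
    apply integral_tsum_of_summable_integral_norm
    · intro k
      exact (hFcont k).integrableOn_Ioc
    · have heq : ∀ k : ℕ, (∫ y in Set.Ioc (0:ℝ) t, ‖F k y‖)
          = ∫ y in Set.Ioc (0:ℝ) t, F k y := by
        intro k
        apply setIntegral_congr_fun measurableSet_Ioc
        intro y hy
        have : 0 ≤ F k y := by
          exact mul_nonneg (by linarith [hy.2]) (div_nonneg (pow_nonneg (mul_nonneg hb hy.1.le) k) (by positivity))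
        simp [Real.norm_of_nonneg this]
      simp_rw [heq, ← intervalIntegral.integral_of_le ht.le, hFval]
      refine Summable.of_nonneg_of_le (fun k => by positivity) (fun k => ?_)
        ((Real.summable_pow_div_factorial (b * t)).mul_left (t ^ 2))
      have h1 : b ^ k * t ^ (k + 2) = t ^ 2 * (b * t) ^ k := by rw [mul_pow]; ring
      rw [h1]
      rw [mul_div_assoc]
      gcongr
      calc (Nat.factorial k : ℝ) ≤ (Nat.factorial k * Nat.factorial (k+1) : ℝ) := fac_le k (k+1)
        _ ≤ _ := by
          have : (1:ℝ) ≤ ((k:ℝ)+1) * ((k:ℝ)+2) := by nlinarith [Nat.cast_nonneg (α := ℝ) k]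
          nlinarith [mul_pos (Nat.cast_pos (α := ℝ) |>.2 (Nat.factorial_pos k)) (Nat.cast_pos (α := ℝ) |>.2 (Nat.factorial_pos (k+1)))]
  have hpt : ∀ y : ℝ, (t - y) * Saux (b * y) = ∑' k : ℕ, F k y := by
    intro y
    rw [Saux, ← tsum_mul_left]
  simp_rw [hpt, intervalIntegral.integral_of_le ht.le]
  rw [← hswap]
  congr 1
  funext k
  rw [← intervalIntegral.integral_of_le ht.le, hFval]

lemma Saux_def (x : ℝ) :
    (∑' k : ℕ, x ^ k / (Nat.factorial k * Nat.factorial (k + 1)) : ℝ) = Saux x := rfl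

/-- The first-passage density `ψ₀(t) = (λ/(t√(λμ))) e^{-(λ+μ)t} I₁(2t√(λμ))` satisfies
`ψ₀(t) = λ e^{-(λ+μ)t} [1 + √(λμ/t) ∫₀^t ((t-y)/√y) I₁(2√(λμty)) dy]`. -/
theorem stmt_10 (lam mu t : ℝ) (hlam : 0 < lam) (hmu : 0 < mu) (ht : 0 < t) :
    (lam / (t * Real.sqrt (lam * mu))) * Real.exp (-(lam + mu) * t) *
      besselI1 (2 * t * Real.sqrt (lam * mu))
    = lam * Real.exp (-(lam + mu) * t) *
      (1 + Real.sqrt (lam * mu / t) *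
        ∫ y in (0:ℝ)..t, ((t - y) / Real.sqrt y) *
          besselI1 (2 * Real.sqrt (lam * mu * t * y))) := by
  set c := lam * mu with hcdef
  have hc : 0 < c := mul_pos hlam hmu
  have hsc : 0 < Real.sqrt c := Real.sqrt_pos.2 hc
  -- Step A : LHS bessel
  have hA : besselI1 (2 * t * Real.sqrt c) = (t * Real.sqrt c) * Saux (c * t ^ 2) := by
    rw [besselI1, show (2 * t * Real.sqrt c) ^ 2 / 4 = c * t ^ 2 by
      rw [mul_pow, mul_pow, Real.sq_sqrt hc.le]; ring, Saux_def]
    ring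
  -- Step C : integrand rewrite
  have hC : (∫ y in (0:ℝ)..t, ((t - y) / Real.sqrt y) * besselI1 (2 * Real.sqrt (c * t * y)))
      = Real.sqrt (c * t) * ∫ y in (0:ℝ)..t, (t - y) * Saux (c * t * y) := by
    rw [intervalIntegral.integral_of_le ht.le, intervalIntegral.integral_of_le ht.le,
      ← MeasureTheory.integral_const_mul]
    apply setIntegral_congr_fun measurableSet_Ioc
    intro y hy
    have hy0 : 0 < y := hy.1
    have hsy : Real.sqrt y ≠ 0 := (Real.sqrt_pos.2 hy0).ne'
    have hb : besselI1 (2 * Real.sqrt (c * t * y))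
        = Real.sqrt (c * t) * Real.sqrt y * Saux (c * t * y) := by
      rw [besselI1, show (2 * Real.sqrt (c * t * y)) ^ 2 / 4 = c * t * y by
        rw [mul_pow, Real.sq_sqrt (by positivity)]; ring, Saux_def,
        Real.sqrt_mul (by positivity : (0:ℝ) ≤ c * t) y]
      ring
    simp only [hb]
    field_simp
  -- Step E : sqrt product
  have hE : Real.sqrt (c / t) * Real.sqrt (c * t) = c := by
    rw [← Real.sqrt_mul (by positivity), show c / t * (c * t) = c ^ 2 by field_simp,
      Real.sqrt_sq hc.le]
  -- Step F : c * tsum = shifted tsum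
  have hFt : c * (∑' k : ℕ, (c * t) ^ k * t ^ (k + 2) /
        ((Nat.factorial k * Nat.factorial (k + 1)) * ((k + 1) * (k + 2))))
      = ∑' k : ℕ, (c * t ^ 2) ^ (k + 1) /
          (Nat.factorial (k + 1) * Nat.factorial (k + 1 + 1)) := by
    rw [← tsum_mul_left]
    apply tsum_congr
    intro k
    have e1 : (c * t ^ 2) ^ (k + 1) = (c * t) ^ k * t ^ (k + 2) * c := by ring
    have e2 : ((Nat.factorial (k + 1) : ℝ) * Nat.factorial (k + 1 + 1))
        = (Nat.factorial k * Nat.factorial (k + 1)) * ((k + 1) * (k + 2)) := by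
      push_cast [Nat.factorial_succ]
      ring
    rw [e1, e2]
    ring
  -- Step G : shift of the series
  have hG : Saux (c * t ^ 2) = 1 + ∑' k : ℕ, (c * t ^ 2) ^ (k + 1) /
      (Nat.factorial (k + 1) * Nat.factorial (k + 1 + 1)) := by
    rw [Saux, Summable.tsum_eq_zero_add (summable_Saux _ (by positivity))]
    norm_num
  rw [hA, hC, key_swap (c * t) t (by positivity) ht, ← mul_assoc (Real.sqrt (c / t)), hE, hFt,
    ← hG]
  have hts : t * Real.sqrt c ≠ 0 := by positivity
  field_simp
end

section
/- For 0 < μ < λ, x ≥ 0, and 0 < α < 1, the first derivative at 0 of M_{A_x}(s) = 2αλ·exp((x/2)[λ-μ-√((λ+μ-2s)²-4λμ)]) / (2λ(α-1)+(λ+μ-2s)+√((λ+μ-2s)²-4λμ)) equals (2 + α(λ+μ)x)/(α(λ-μ)), i.e. E[A_x] = (2+α(λ+μ)x)/(α(λ-μ)). -/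
/-- The derivative at `0` of the MGF of the absorption time `A_x` equals
`(2 + α(λ+μ)x)/(α(λ-μ))`, i.e. `E[A_x] = (2 + α(λ+μ)x)/(α(λ-μ))`. -/
theorem stmt_17 (lam mu x α : ℝ) (hmu : 0 < mu) (hlam : mu < lam) (hx : 0 ≤ x)
    (hα0 : 0 < α) (hα1 : α < 1) :
    deriv (fun s : ℝ =>
      2*α*lam * Real.exp ((x/2) * (lam - mu - Real.sqrt ((lam + mu - 2*s)^2 - 4*lam*mu))) /
        (2*lam*(α-1) + (lam + mu - 2*s) + Real.sqrt ((lam + mu - 2*s)^2 - 4*lam*mu))) 0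
      = (2 + α*(lam + mu)*x) / (α * (lam - mu)) := by
  have hlm : (0:ℝ) < lam - mu := sub_pos.2 hlam
  have hlampos : (0:ℝ) < lam := hmu.trans hlam
  have h1 : HasDerivAt (fun s : ℝ => lam + mu - 2*s) (-2) 0 := by
    simpa using (((hasDerivAt_id (0:ℝ)).const_mul 2).const_sub (lam + mu))
  have h2 : HasDerivAt (fun s : ℝ => (lam + mu - 2*s)^2 - 4*lam*mu)
      (2*(lam + mu - 2*0)^1*(-2)) 0 := by
    simpa using ((h1.pow 2).sub_const (4*lam*mu))
  have hval : (lam + mu - 2*(0:ℝ))^2 - 4*lam*mu = (lam - mu)^2 := by ring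
  have hsqrt0 : Real.sqrt ((lam + mu - 2*(0:ℝ))^2 - 4*lam*mu) = lam - mu := by
    rw [hval]; exact Real.sqrt_sq hlm.le
  have hne : (fun s : ℝ => (lam + mu - 2*s)^2 - 4*lam*mu) 0 ≠ 0 := by
    simp only []; rw [hval]; positivity
  have h3 := h2.sqrt hne
  set d3 : ℝ := (2*(lam + mu - 2*0)^1*(-2)) / (2 * Real.sqrt ((lam + mu - 2*(0:ℝ))^2 - 4*lam*mu)) with hd3
  have h3' : HasDerivAt (fun s : ℝ => Real.sqrt ((lam + mu - 2*s)^2 - 4*lam*mu)) d3 0 := h3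
  -- numerator
  have hN : HasDerivAt (fun s : ℝ =>
      2*α*lam * Real.exp ((x/2) * (lam - mu - Real.sqrt ((lam + mu - 2*s)^2 - 4*lam*mu))))
      (2*α*lam * (Real.exp ((x/2) * (lam - mu - Real.sqrt ((lam + mu - 2*(0:ℝ))^2 - 4*lam*mu))) * ((x/2) * (-d3)))) 0 := by
    exact (((h3'.const_sub (lam - mu)).const_mul (x/2)).exp).const_mul (2*α*lam)
  -- denominator
  have hD : HasDerivAt (fun s : ℝ =>
      2*lam*(α-1) + (lam + mu - 2*s) + Real.sqrt ((lam + mu - 2*s)^2 - 4*lam*mu))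
      ((-2) + d3) 0 := (h1.const_add (2*lam*(α-1))).add h3'
  have hD0 : 2*lam*(α-1) + (lam + mu - 2*(0:ℝ)) + Real.sqrt ((lam + mu - 2*(0:ℝ))^2 - 4*lam*mu) = 2*α*lam := by
    rw [hsqrt0]; ring
  have hD0ne : (fun s : ℝ =>
      2*lam*(α-1) + (lam + mu - 2*s) + Real.sqrt ((lam + mu - 2*s)^2 - 4*lam*mu)) 0 ≠ 0 := by
    simp only []; rw [hD0]; positivity
  have hQ := hN.div hD hD0ne
  have hQd := hQ.deriv
  simp only [Pi.div_def] at hQd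
  rw [hQd]
  have hlamne : lam ≠ 0 := (hmu.trans hlam).ne'
  have hαne : α ≠ 0 := hα0.ne'
  have hd3' : d3 = -2*(lam+mu)/(lam-mu) := by
    rw [hd3, hsqrt0]
    field_simp
    ring
  simp only [hsqrt0, hd3']
  rw [show 2*lam*(α-1) + (lam + mu - 2*(0:ℝ)) + (lam - mu) = 2*α*lam by ring]
  rw [show (x/2) * (lam - mu - (lam - mu)) = 0 by ring, Real.exp_zero]
  rw [div_eq_div_iff (by positivity) (mul_pos hα0 hlm).ne']
  field_simp
  ring
end
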